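/- Lemma 1.3 (absolute continuity/singularity dichotomy). Let E be a measurable space, m a σ-finite measure on E, and κ : Kernel E E a Markov kernel such that for every finite measure μ on E with μ ≪ m one has μ.bind κ ≪ m. Then every probability measure μ* on E with μ*.bind κ = μ* that is an extreme point of the convex set of probability measures ν with ν.bind κ = ν satisfies either μ* ≪ m or μ* ⟂ m. -/

import Mathlib

open MeasureTheory ENNReal ProbabilityTheory

lemma bind_measure_univ {E : Type*} [MeasurableSpace E] (μ : Measure E)
    (κ : Kernel E E) [IsMarkovKernel κ] : (μ.bind ⇑κ) Set.univ = μ Set.univ := by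
  rw [Measure.bind_apply MeasurableSet.univ (κ.aemeasurable)]
  simp

/-- **Lemma 1.3** (absolute continuity/singularity dichotomy). If a Markov kernel preserves
absolute continuity with respect to a σ-finite measure `m`, then every ergodic (extreme)
invariant probability measure is either absolutely continuous or singular w.r.t. `m`. -/
theorem lem_1_3_dichotomy
    {E : Type*} [MeasurableSpace E] (m : Measure E) [SigmaFinite m]
    (κ : Kernel E E) [IsMarkovKernel κ]
    (hpres : ∀ μ : Measure E, IsFiniteMeasure μ → μ ≪ m → μ.bind ⇑κ ≪ m)
    (μs : Measure E) [IsProbabilityMeasure μs]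
    (hinv : μs.bind ⇑κ = μs)
    (hext : ∀ (ν₁ ν₂ : Measure E) (a : ℝ≥0∞),
      IsProbabilityMeasure ν₁ → IsProbabilityMeasure ν₂ →
      ν₁.bind ⇑κ = ν₁ → ν₂.bind ⇑κ = ν₂ → 0 < a → a < 1 →
      μs = a • ν₁ + (1 - a) • ν₂ → ν₁ = ν₂) :
    μs ≪ m ∨ μs.MutuallySingular m := by
  set μac : Measure E := m.withDensity (μs.rnDeriv m) with hμac
  set μsing : Measure E := μs.singularPart m with hμsing
  have hdec : μs = μsing + μac := (μs.haveLebesgueDecomposition_add m)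
  have hac : μac ≪ m := withDensity_absolutelyContinuous _ _
  have hsing : μsing.MutuallySingular m := μs.mutuallySingular_singularPart m
  have hac_fin : IsFiniteMeasure μac := by
    constructor
    calc μac Set.univ ≤ μs Set.univ := by
          rw [hdec]; simp [Measure.add_apply, le_add_self]
      _ < ∞ := by simp
  have hsing_fin : IsFiniteMeasure μsing := by
    constructor
    calc μsing Set.univ ≤ μs Set.univ := by
          rw [hdec]; simp [Measure.add_apply]
      _ < ∞ := by simp
  -- the bind of μac is ≪ m
  have hbac : μac.bind ⇑κ ≪ m := hpres μac hac_fin hac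
  have hbac_fin : IsFiniteMeasure (μac.bind ⇑κ) := by
    constructor; rw [bind_measure_univ]; exact measure_lt_top _ _
  have hbsing_fin : IsFiniteMeasure (μsing.bind ⇑κ) := by
    constructor; rw [bind_measure_univ]; exact measure_lt_top _ _
  -- decompose μsing.bind κ w.r.t. m
  have hbdec : μsing.bind ⇑κ
      = (μsing.bind ⇑κ).singularPart m + m.withDensity ((μsing.bind ⇑κ).rnDeriv m) :=
    (μsing.bind ⇑κ).haveLebesgueDecomposition_add m
  set t : Measure E := (μsing.bind ⇑κ).singularPart m with ht
  set w : Measure E := m.withDensity ((μsing.bind ⇑κ).rnDeriv m) with hw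
  have htsing : t.MutuallySingular m := (μsing.bind ⇑κ).mutuallySingular_singularPart m
  -- μs = t + (μac.bind κ + w) with t ⟂ m, μac.bind κ + w ≪ m
  have hsum : μs = t + (μac.bind ⇑κ + w) := by
    conv_lhs => rw [← hinv]
    conv_lhs => rw [hdec]
    rw [Measure.comp_add, hbdec]
    abel
  -- uniqueness of Lebesgue decomposition: t = μsing
  have hbacw_ac : (μac.bind ⇑κ + w) ≪ m :=
    (Measure.AbsolutelyContinuous.add_left_iff).2
      ⟨hbac, withDensity_absolutelyContinuous _ _⟩
  have hteq : t = μsing := by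
    have h1 : t = μs.singularPart m := by
      refine Measure.eq_singularPart (f := (μac.bind ⇑κ).rnDeriv m
        + (μsing.bind ⇑κ).rnDeriv m) (((μac.bind ⇑κ).measurable_rnDeriv m).add
        (((μsing.bind ⇑κ)).measurable_rnDeriv m)) htsing ?_
      rw [withDensity_add_left ((μac.bind ⇑κ).measurable_rnDeriv m)]
      rw [Measure.withDensity_rnDeriv_eq _ _ hbac]
      exact hsum
    rw [h1, hμsing]
  -- cancel t: μac.bind κ + w = μac
  have hcancel : μac.bind ⇑κ + w = μac := by
    have h2 : μsing + (μac.bind ⇑κ + w) = μsing + μac := by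
      rw [← hteq]; rw [← hsum, hdec, hteq]
    ext s hs
    have := congrArg (fun ρ : Measure E => ρ s) h2
    simp only [Measure.add_apply] at this
    exact (ENNReal.add_right_inj (measure_lt_top μsing s).ne).mp this
  -- mass comparison gives w = 0, hence μac.bind κ = μac
  have hwzero : w = 0 := by
    have hmass : (μac.bind ⇑κ) Set.univ = μac Set.univ := bind_measure_univ μac κ
    have := congrArg (fun ρ : Measure E => ρ Set.univ) hcancel
    simp only [Measure.add_apply, hmass] at this
    have hw0 : w Set.univ = 0 := by
      refine (ENNReal.add_right_inj (measure_lt_top μac Set.univ).ne).mp ?_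
      rw [this, add_zero]
    exact Measure.measure_univ_eq_zero.mp hw0
  have hac_inv : μac.bind ⇑κ = μac := by
    have h := hcancel
    rw [hwzero, add_zero] at h
    exact h
  have hsing_inv : μsing.bind ⇑κ = μsing := by
    have h0 : (μsing + μac).bind ⇑κ = μsing + μac := by rw [← hdec, hinv, hdec]
    rw [Measure.comp_add, hac_inv] at h0
    ext s hs
    have := congrArg (fun ρ : Measure E => ρ s) h0
    simp only [Measure.add_apply] at this
    exact (ENNReal.add_left_inj (measure_lt_top μac s).ne).mp this
  -- total masses
  set a : ℝ≥0∞ := μac Set.univ with ha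
  set b : ℝ≥0∞ := μsing Set.univ with hb
  have hab : b + a = 1 := by
    have := congrArg (fun ρ : Measure E => ρ Set.univ) hdec
    simp only [Measure.add_apply, measure_univ] at this
    exact this.symm
  have ha_le : a ≤ 1 := le_trans le_add_self hab.le
  have hb_le : b ≤ 1 := le_trans le_self_add hab.le
  have ha_ne_top : a ≠ ∞ := (lt_of_le_of_lt ha_le one_lt_top).ne
  have hb_ne_top : b ≠ ∞ := (lt_of_le_of_lt hb_le one_lt_top).ne
  rcases eq_or_ne b 0 with hb0 | hb0
  · -- μsing = 0, so μs ≪ m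
    left
    have : μsing = 0 := Measure.measure_univ_eq_zero.mp hb0
    rw [hdec, this, zero_add]
    exact hac
  rcases eq_or_ne a 0 with ha0 | ha0
  · -- μac = 0, so μs ⟂ m
    right
    have : μac = 0 := Measure.measure_univ_eq_zero.mp ha0
    rw [hdec, this, add_zero]
    exact hsing
  · -- nontrivial case: contradiction with extremality
    exfalso
    have ha_lt_one : a < 1 := by
      rcases lt_or_ge a 1 with h | h
      · exact h
      · exfalso
        have : b = 0 := by
          have h1 : a = 1 := le_antisymm ha_le h
          have := hab
          rw [h1] at this
          exact by
            have h2 : b + 1 = 0 + 1 := by rw [this, zero_add]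
            exact (ENNReal.add_left_inj one_ne_top).mp h2
        exact hb0 this
    have hone_sub : 1 - a = b := by
      rw [← hab]; rw [ENNReal.add_sub_cancel_right ha_ne_top]
    set ν₁ : Measure E := a⁻¹ • μac with hν₁
    set ν₂ : Measure E := b⁻¹ • μsing with hν₂
    have hν₁_prob : IsProbabilityMeasure ν₁ := by
      constructor
      rw [hν₁, Measure.smul_apply, smul_eq_mul, ← ha, ENNReal.inv_mul_cancel ha0 ha_ne_top]
    have hν₂_prob : IsProbabilityMeasure ν₂ := by
      constructor
      rw [hν₂, Measure.smul_apply, smul_eq_mul, ← hb, ENNReal.inv_mul_cancel hb0 hb_ne_top]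
    have hν₁_inv : ν₁.bind ⇑κ = ν₁ := by
      rw [hν₁, Measure.comp_smul, hac_inv]
    have hν₂_inv : ν₂.bind ⇑κ = ν₂ := by
      rw [hν₂, Measure.comp_smul, hsing_inv]
    have hsplit : μs = a • ν₁ + (1 - a) • ν₂ := by
      rw [hone_sub, hν₁, hν₂, smul_smul, smul_smul,
        ENNReal.mul_inv_cancel ha0 ha_ne_top, ENNReal.mul_inv_cancel hb0 hb_ne_top,
        one_smul, one_smul, hdec]
      abel
    have heq := hext ν₁ ν₂ a hν₁_prob hν₂_prob hν₁_inv hν₂_inv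
      (pos_iff_ne_zero.mpr ha0) ha_lt_one hsplit
    have hν₁_ac : ν₁ ≪ m := hac.smul_left _
    have hν₂_sing : ν₂.MutuallySingular m := hsing.smul _
    rw [heq] at hν₁_ac
    have : ν₂ = 0 :=
      Measure.eq_zero_of_absolutelyContinuous_of_mutuallySingular hν₁_ac hν₂_sing
    have hmass : ν₂ Set.univ = 1 := hν₂_prob.measure_univ
    rw [this] at hmass
    simp at hmass
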